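/- arXiv:2011.07604 — 3 statements merged into one kernel-verified Lean document; each statement's English description precedes it below -/
import Mathlib

section
/- Let P be an n×n row-stochastic matrix and let π ∈ ℝⁿ satisfy π ≥ 0 entrywise and πᵀP = πᵀ. Then for every k ≥ 1 one has πᵀF_{k+1} ≤ πᵀF_k entrywise, and consequently πᵀF_k ≤ πᵀ entrywise for all k ≥ 1. -/
/-- First-hitting-time probability matrices: `hitF P t` is `F_{t+1}`, i.e.
`F_1 = P` and `F_{k+1} = P (F_k - Diag(F_k))`. -/
def hitF {α : Type*} [Fintype α] [DecidableEq α] (P : Matrix α α ℝ) : ℕ → Matrix α α ℝ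
  | 0 => P
  | k + 1 => P * (hitF P k - Matrix.diagonal fun i => hitF P k i i)

lemma hitF_nonneg {n : ℕ} (P : Matrix (Fin n) (Fin n) ℝ)
    (hP0 : ∀ i j, 0 ≤ P i j) : ∀ k i j, 0 ≤ hitF P k i j := by
  intro k
  induction k with
  | zero => exact hP0
  | succ k ih =>
    intro i j
    show 0 ≤ (P * (hitF P k - Matrix.diagonal fun i => hitF P k i i)) i j
    rw [Matrix.mul_apply]
    apply Finset.sum_nonneg
    intro l _
    apply mul_nonneg (hP0 i l)
    simp only [Matrix.sub_apply, Matrix.diagonal_apply]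
    by_cases h : l = j
    · subst h; simp
    · simp [h]; exact ih l j

lemma key {n : ℕ} (P : Matrix (Fin n) (Fin n) ℝ)
    (π : Fin n → ℝ)
    (hπP : ∀ j, ∑ i, π i * P i j = π j) (k : ℕ) (j : Fin n) :
    ∑ i, π i * hitF P (k + 1) i j
      = (∑ i, π i * hitF P k i j) - π j * hitF P k j j := by
  have : ∀ i, hitF P (k+1) i j
      = ∑ l, P i l * (hitF P k l j - if l = j then hitF P k j j else 0) := by
    intro i
    show (P * (hitF P k - Matrix.diagonal fun i => hitF P k i i)) i j = _
    rw [Matrix.mul_apply]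
    refine Finset.sum_congr rfl fun l _ => ?_
    simp [Matrix.sub_apply, Matrix.diagonal_apply]
    by_cases h : l = j <;> simp [h]
  simp only [this, Finset.mul_sum]
  rw [Finset.sum_comm]
  have step : ∀ l, ∑ i, π i * (P i l * (hitF P k l j - if l = j then hitF P k j j else 0))
      = π l * (hitF P k l j - if l = j then hitF P k j j else 0) := by
    intro l
    rw [← hπP l, Finset.sum_mul]
    exact Finset.sum_congr rfl fun i _ => by ring
  simp only [step]
  simp only [mul_sub]
  rw [Finset.sum_sub_distrib]
  congr 1
  rw [Finset.sum_congr rfl (fun l _ => mul_ite (l = j) (π l) (hitF P k j j) 0)]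
  simp [Finset.sum_ite_eq']

/-- For a row-stochastic `P` with nonnegative stationary `π`, one has
`πᵀ F_{k+1} ≤ πᵀ F_k` entrywise for all `k ≥ 1`, and consequently `πᵀ F_k ≤ πᵀ`
entrywise for all `k ≥ 1`. (Here `hitF P k = F_{k+1}`.) -/
theorem stmt_1 (n : ℕ) (P : Matrix (Fin n) (Fin n) ℝ)
    (hP0 : ∀ i j, 0 ≤ P i j) (hP1 : ∀ i, ∑ j, P i j = 1)
    (π : Fin n → ℝ) (hπ0 : ∀ i, 0 ≤ π i)
    (hπP : ∀ j, ∑ i, π i * P i j = π j) :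
    (∀ k : ℕ, ∀ j : Fin n,
        ∑ i, π i * hitF P (k + 1) i j ≤ ∑ i, π i * hitF P k i j) ∧
    (∀ k : ℕ, ∀ j : Fin n, ∑ i, π i * hitF P k i j ≤ π j) := by
  have h1 : ∀ k : ℕ, ∀ j : Fin n,
      ∑ i, π i * hitF P (k + 1) i j ≤ ∑ i, π i * hitF P k i j := by
    intro k j
    rw [key P π hπP k j]
    have := mul_nonneg (hπ0 j) (hitF_nonneg P hP0 k j j)
    linarith
  refine ⟨h1, ?_⟩
  intro k
  induction k with
  | zero => intro j; simp only [hitF]; exact le_of_eq (hπP j)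
  | succ k ih => intro j; exact (h1 k j).trans (ih j)
end

section
/- Let P be an n×n row-stochastic matrix and let i, j, k ∈ {1,…,n} be pairwise distinct. Suppose every directed walk from i to k in the transition digraph of P passes through j, i.e., for every finite sequence v_0 = i, v_1, …, v_m = k (m ≥ 1) with P(v_{t}, v_{t+1}) > 0 for all 0 ≤ t < m, there exists some t with v_t = j. Then for every τ ≥ 1, Σ_{t=1}^{τ} F_t(i,k) ≤ Σ_{t=1}^{τ} F_t(i,j), i.e., ℙ(T_ik ≤ τ) ≤ ℙ(T_ij ≤ τ). -/
section Aux

variable {n : ℕ} (P : Matrix (Fin n) (Fin n) ℝ)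

noncomputable def gcap (τ : ℕ) (a b : Fin n) : ℝ := ∑ t ∈ Finset.range τ, hitF P t a b

lemma hitF_succ_apply (t : ℕ) (a j : Fin n) :
    hitF P (t+1) a j = ∑ b, P a b * (if b = j then 0 else hitF P t b j) := by
  simp only [hitF, Matrix.mul_apply, Matrix.sub_apply, Matrix.diagonal_apply]
  refine Finset.sum_congr rfl fun b _ => ?_
  by_cases h : b = j <;> simp [h]

lemma gcap_succ (τ : ℕ) (a j : Fin n) :
    gcap P (τ+1) a j = P a j + ∑ b, P a b * (if b = j then 0 else gcap P τ b j) := by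
  unfold gcap
  rw [Finset.sum_range_succ']
  simp only [hitF_succ_apply]
  rw [Finset.sum_comm, add_comm]
  show hitF P 0 a j + _ = _
  simp only [hitF]
  congr 1
  refine Finset.sum_congr rfl fun b _ => ?_
  by_cases h : b = j <;> simp [h, Finset.mul_sum]

lemma hitF_nonneg_s8 (hP0 : ∀ a b, 0 ≤ P a b) : ∀ t a b, 0 ≤ hitF P t a b := by
  intro t
  induction t with
  | zero => exact hP0
  | succ t ih =>
    intro a b
    rw [hitF_succ_apply]
    refine Finset.sum_nonneg fun c _ => mul_nonneg (hP0 a c) ?_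
    by_cases h : c = b <;> simp [h, ih]

lemma gcap_nonneg (hP0 : ∀ a b, 0 ≤ P a b) (τ : ℕ) (a b : Fin n) : 0 ≤ gcap P τ a b :=
  Finset.sum_nonneg fun t _ => hitF_nonneg_s8 P hP0 t a b

lemma gcap_le_one (hP0 : ∀ a b, 0 ≤ P a b) (hP1 : ∀ a, ∑ b, P a b = 1) :
    ∀ τ a j, gcap P τ a j ≤ 1 := by
  intro τ
  induction τ with
  | zero => intro a j; simp [gcap]
  | succ τ ih =>
    intro a j
    rw [gcap_succ]
    have h1 : ∑ b, P a b * (if b = j then 0 else gcap P τ b j)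
        ≤ ∑ b, (if b = j then 0 else P a b) := by
      refine Finset.sum_le_sum fun b _ => ?_
      by_cases h : b = j
      · simp [h]
      · simp only [h, if_false]
        nlinarith [hP0 a b, ih b j, gcap_nonneg P hP0 τ b j]
    have h2 : P a j + ∑ b, (if b = j then 0 else P a b) = 1 := by
      have : P a j = ∑ b, (if b = j then P a b else 0) := by
        rw [Finset.sum_ite_eq' Finset.univ j (fun b => P a b)]; simp
      rw [this, ← Finset.sum_add_distrib, ← hP1 a]
      refine Finset.sum_congr rfl fun b _ => ?_
      by_cases h : b = j <;> simp [h]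
    linarith

end Aux

/-- Dominated strategy for the intruder, case (ii): if every directed walk from `i` to `k`
in the transition digraph of the row-stochastic matrix `P` passes through `j`, then
`ℙ(T_ik ≤ τ) ≤ ℙ(T_ij ≤ τ)` for every `τ ≥ 1`. -/
theorem stmt_8 (n : ℕ) (P : Matrix (Fin n) (Fin n) ℝ)
    (hP0 : ∀ a b, 0 ≤ P a b) (hP1 : ∀ a, ∑ b, P a b = 1)
    (i j k : Fin n) (hij : i ≠ j) (hik : i ≠ k) (hjk : j ≠ k)
    (hwalk : ∀ m : ℕ, 1 ≤ m → ∀ v : ℕ → Fin n, v 0 = i → v m = k →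
      (∀ t < m, 0 < P (v t) (v (t + 1))) → ∃ t ≤ m, v t = j)
    (τ : ℕ) (hτ : 1 ≤ τ) :
    ∑ t ∈ Finset.range τ, hitF P t i k ≤ ∑ t ∈ Finset.range τ, hitF P t i j := by
  -- Q a : a avoids j, k and every walk from a to k hits j
  set Q : Fin n → Prop := fun a => a ≠ j ∧ a ≠ k ∧
    (∀ m : ℕ, 1 ≤ m → ∀ v : ℕ → Fin n, v 0 = a → v m = k →
      (∀ t < m, 0 < P (v t) (v (t + 1))) → ∃ t ≤ m, v t = j) with hQ
  have hQi : Q i := ⟨hij, hik, hwalk⟩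
  -- P a k = 0 for a with Q a
  have hPak : ∀ a, Q a → P a k = 0 := by
    rintro a ⟨haj, hak, hwa⟩
    by_contra hne
    have hpos : 0 < P a k := lt_of_le_of_ne (hP0 a k) (Ne.symm hne)
    set v : ℕ → Fin n := fun t => if t = 0 then a else k with hv
    have hv0 : v 0 = a := by simp [hv]
    have hv1 : v 1 = k := by simp [hv]
    have hedge : ∀ t < 1, 0 < P (v t) (v (t + 1)) := by
      intro t ht
      interval_cases t
      simpa [hv] using hpos
    obtain ⟨t, ht, hvj⟩ := hwa 1 le_rfl v hv0 hv1 hedge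
    interval_cases t
    · exact haj (by simpa [hv] using hvj)
    · have hkj : k = j := by simpa [hv] using hvj
      exact hjk hkj.symm
  -- Q propagates along edges not through j
  have hstep : ∀ a, Q a → ∀ b, b ≠ j → 0 < P a b → Q b := by
    rintro a hQa b hbj hpos
    obtain ⟨haj, hak, hwa⟩ := hQa
    have hbk : b ≠ k := by
      rintro rfl
      exact absurd (hPak a ⟨haj, hak, hwa⟩) (ne_of_gt hpos)
    refine ⟨hbj, hbk, ?_⟩
    intro m hm w hw0 hwm hedge
    set v : ℕ → Fin n := fun t => if t = 0 then a else w (t-1) with hv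
    have hv0 : v 0 = a := by simp [hv]
    have hvm : v (m+1) = k := by simp [hv, hwm]
    have hedge' : ∀ t < m + 1, 0 < P (v t) (v (t + 1)) := by
      intro t htm
      rcases Nat.eq_zero_or_pos t with rfl | htpos
      · simpa [hv, hw0] using hpos
      · obtain ⟨s, rfl⟩ := Nat.exists_eq_add_of_le htpos
        have h1 : 1 + s ≠ 0 := by omega
        have h2 : 1 + s + 1 ≠ 0 := by omega
        simp only [hv, h1, h2, if_false, Nat.add_comm 1 s, Nat.add_sub_cancel]
        exact hedge s (by omega)
    obtain ⟨t, ht, hvj⟩ := hwa (m+1) (Nat.le_add_left 1 m) v hv0 hvm hedge'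
    rcases Nat.eq_zero_or_pos t with rfl | htpos
    · exact absurd (by simpa [hv] using hvj) haj
    · obtain ⟨s, rfl⟩ := Nat.exists_eq_add_of_le htpos
      refine ⟨s, by omega, ?_⟩
      have h1 : 1 + s ≠ 0 := by omega
      simp only [hv, h1, if_false, Nat.add_comm 1 s, Nat.add_sub_cancel] at hvj
      exact hvj
  -- main induction
  have main : ∀ τ a, Q a → gcap P τ a k ≤ gcap P τ a j := by
    intro τ
    induction τ with
    | zero => intro a _; simp [gcap]
    | succ τ ih =>
      intro a hQa
      obtain ⟨haj, hak, -⟩ := id hQa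
      rw [gcap_succ, gcap_succ, hPak a hQa, zero_add]
      have key : ∀ b : Fin n, P a b * (if b = k then 0 else gcap P τ b k)
          ≤ (if b = j then P a b else 0) + P a b * (if b = j then 0 else gcap P τ b j) := by
        intro b
        by_cases hbj : b = j
        · rw [hbj, if_neg hjk, if_pos rfl, if_pos rfl, mul_zero, add_zero]
          nlinarith [hP0 a j, gcap_le_one P hP0 hP1 τ j k, gcap_nonneg P hP0 τ j k]
        · simp only [hbj, if_false, zero_add]
          by_cases hbk : b = k
          · rw [if_pos hbk, mul_zero]
            exact mul_nonneg (hP0 a b) (gcap_nonneg P hP0 τ b j)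
          · simp only [hbk, if_false]
            rcases lt_or_eq_of_le (hP0 a b) with hpos | heq
            · exact mul_le_mul_of_nonneg_left (ih b (hstep a hQa b hbj hpos)) (le_of_lt hpos)
            · simp [← heq]
      calc ∑ b, P a b * (if b = k then 0 else gcap P τ b k)
          ≤ ∑ b, ((if b = j then P a b else 0) + P a b * (if b = j then 0 else gcap P τ b j)) :=
            Finset.sum_le_sum fun b _ => key b
        _ = P a j + ∑ b, P a b * (if b = j then 0 else gcap P τ b j) := by
            rw [Finset.sum_add_distrib, Finset.sum_ite_eq' Finset.univ j (fun b => P a b)]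
            simp
  exact main τ i hQi
end

section
/- Let n ≥ 3 and let P be an n×n row-stochastic matrix of star form with center 1: P(j,1) = 1 and P(j,k) = 0 for all j ∈ {2,…,n}, k ≠ 1, and row 1 satisfying P(1,1) = p with 0 < p < 1. Let P₁ be the matrix equal to P except in row 1, where P₁(1,1) = 0 and P₁(1,j) = P(1,j)/(1−p) for j ∈ {2,…,n}. Then for every τ ≥ 1 and all i, j ∈ {2,…,n}, Σ_{t=1}^{τ} F¹_t(i,j) ≥ Σ_{t=1}^{τ} F_t(i,j), where F¹_t and F_t are the first-hitting-time probability matrices of P₁ and P respectively; i.e., removing the self-loop at the center of a star never decreases the capture probability between leaves. -/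
lemma hitF_nonneg_s13 {n : ℕ} (Q : Matrix (Fin n) (Fin n) ℝ) (h : ∀ a b, 0 ≤ Q a b) :
    ∀ k a b, 0 ≤ hitF Q k a b := by
  intro k
  induction k with
  | zero => exact h
  | succ k ih =>
    intro a b
    simp only [hitF, Matrix.mul_apply]
    refine Finset.sum_nonneg fun x _ => mul_nonneg (h a x) ?_
    rw [Matrix.sub_apply]
    by_cases hx : x = b
    · subst hx; rw [Matrix.diagonal_apply_eq]; simp
    · rw [Matrix.diagonal_apply_ne _ hx]; simpa using ih x b

lemma star_aux {n : ℕ} (Q : Matrix (Fin n) (Fin n) ℝ) (c j : Fin n) (hcj : j ≠ c)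
    (hleaf : ∀ b : Fin n, b ≠ c → Q b c = 1 ∧ ∀ k, k ≠ c → Q b k = 0) :
    (∀ k, ∀ b, b ≠ c → hitF Q (k+1) b j = hitF Q k c j) ∧
    hitF Q 1 c j = Q c c * Q c j ∧
    (∀ k, hitF Q (k+2) c j = Q c c * hitF Q (k+1) c j +
      (∑ b ∈ Finset.univ \ {c, j}, Q c b) * hitF Q k c j) := by
  have hdiag : ∀ k, (hitF Q k - Matrix.diagonal fun i => hitF Q k i i) c j = hitF Q k c j := by
    intro k
    rw [Matrix.sub_apply, Matrix.diagonal_apply_ne _ (Ne.symm hcj), sub_zero]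
  have hdiagj : ∀ k, (hitF Q k - Matrix.diagonal fun i => hitF Q k i i) j j = 0 := by
    intro k; rw [Matrix.sub_apply, Matrix.diagonal_apply_eq]; ring
  have hdiagb : ∀ k b, b ≠ j →
      (hitF Q k - Matrix.diagonal fun i => hitF Q k i i) b j = hitF Q k b j := by
    intro k b hb
    rw [Matrix.sub_apply, Matrix.diagonal_apply_ne _ hb, sub_zero]
  have hF : ∀ k, hitF Q (k+1) = Q * (hitF Q k - Matrix.diagonal fun i => hitF Q k i i) :=
    fun k => rfl
  have hleafF : ∀ k, ∀ b, b ≠ c → hitF Q (k+1) b j = hitF Q k c j := by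
    intro k b hb
    rw [hF, Matrix.mul_apply, Finset.sum_eq_single_of_mem c (Finset.mem_univ c)
      (fun x _ hx => by rw [(hleaf b hb).2 x hx, zero_mul])]
    rw [(hleaf b hb).1, one_mul, hdiag]
  have hsd : ((Finset.univ \ {c} : Finset (Fin n)) \ {j}) = Finset.univ \ {c, j} := by
    ext x; simp only [Finset.mem_sdiff, Finset.mem_univ, Finset.mem_singleton, Finset.mem_insert, true_and]; tauto
  have split : ∀ M : Matrix (Fin n) (Fin n) ℝ, (Q * M) c j =
      Q c c * M c j + Q c j * M j j + ∑ b ∈ Finset.univ \ {c, j}, Q c b * M b j := by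
    intro M
    rw [Matrix.mul_apply]
    rw [Finset.sum_eq_add_sum_sdiff_singleton_of_mem (Finset.mem_univ c)]
    rw [Finset.sum_eq_add_sum_sdiff_singleton_of_mem
      (Finset.mem_sdiff.2 ⟨Finset.mem_univ j, by simpa using hcj⟩), hsd]
    ring
  refine ⟨hleafF, ?_, ?_⟩
  · show hitF Q (0+1) c j = _
    rw [hF, split, hdiag, hdiagj]
    have : ∀ b ∈ Finset.univ \ ({c, j} : Finset (Fin n)),
        Q c b * (hitF Q 0 - Matrix.diagonal fun i => hitF Q 0 i i) b j = 0 := by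
      intro b hb
      simp only [Finset.mem_sdiff, Finset.mem_insert, Finset.mem_singleton] at hb
      rw [hdiagb 0 b (fun h => hb.2 (Or.inr h))]
      have : hitF Q 0 b j = 0 := (hleaf b (fun h => hb.2 (Or.inl h))).2 j hcj
      rw [this, mul_zero]
    rw [Finset.sum_eq_zero this]
    show Q c c * hitF Q 0 c j + Q c j * 0 + 0 = _
    simp [hitF]
  · intro k
    show hitF Q (k+1+1) c j = _
    rw [hF, split, hdiag, hdiagj]
    have : ∀ b ∈ Finset.univ \ ({c, j} : Finset (Fin n)),
        Q c b * (hitF Q (k+1) - Matrix.diagonal fun i => hitF Q (k+1) i i) b j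
          = Q c b * hitF Q k c j := by
      intro b hb
      simp only [Finset.mem_sdiff, Finset.mem_insert, Finset.mem_singleton] at hb
      rw [hdiagb (k+1) b (fun h => hb.2 (Or.inr h)),
        hleafF k b (fun h => hb.2 (Or.inl h))]
    rw [Finset.sum_congr rfl this, ← Finset.sum_mul, mul_zero, add_zero]

lemma sumrec (a : ℕ → ℝ) (p q : ℝ) (h1 : a 1 = p * a 0)
    (h2 : ∀ k, a (k+2) = p * a (k+1) + q * a k) (m : ℕ) :
    ∑ k ∈ Finset.range (m+2), a k =
      a 0 + p * ∑ k ∈ Finset.range (m+1), a k + q * ∑ k ∈ Finset.range m, a k := by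
  induction m with
  | zero => simp [Finset.sum_range_succ, h1]; try ring
  | succ m ih =>
    calc ∑ k ∈ Finset.range (m+1+2), a k
        = ∑ k ∈ Finset.range (m+2), a k + a (m+2) := Finset.sum_range_succ a (m+2)
      _ = (a 0 + p * ∑ k ∈ Finset.range (m+1), a k + q * ∑ k ∈ Finset.range m, a k)
            + (p * a (m+1) + q * a m) := by rw [ih, h2]
      _ = a 0 + p * (∑ k ∈ Finset.range (m+1), a k + a (m+1))
            + q * (∑ k ∈ Finset.range m, a k + a m) := by ring
      _ = a 0 + p * ∑ k ∈ Finset.range (m+1+1), a k + q * ∑ k ∈ Finset.range (m+1), a k := by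
            rw [Finset.sum_range_succ a (m+1), Finset.sum_range_succ a m]

lemma compare (S S' : ℕ → ℝ) (p q r : ℝ) (hp0 : 0 ≤ p) (hq0 : 0 ≤ q) (hr0 : 0 ≤ r)
    (hp1 : p < 1)
    (hS0 : S 0 = 0) (hS1 : S 1 = r) (hS : ∀ m, S (m+2) = r + p * S (m+1) + q * S m)
    (hS'0 : S' 0 = 0) (hS'1 : S' 1 = r/(1-p))
    (hS' : ∀ m, S' (m+2) = r/(1-p) + (q/(1-p)) * S' m)
    (hmono : ∀ m, S' m ≤ S' (m+1)) : ∀ m, S m ≤ S' m := by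
  have h1p : (0:ℝ) < 1 - p := by linarith
  have key : ∀ m, r + q * S' m = (1-p) * S' (m+2) := by
    intro m; rw [hS' m]; field_simp
  have main : ∀ m, S m ≤ S' m ∧ S (m+1) ≤ S' (m+1) := by
    intro m
    induction m with
    | zero =>
      constructor
      · rw [hS0, hS'0]
      · rw [hS1, hS'1, le_div_iff₀ h1p]
        nlinarith
    | succ m ih =>
      refine ⟨ih.2, ?_⟩
      rw [hS m]
      have h1 : S (m+1) ≤ S' (m+2) := ih.2.trans (hmono (m+1))
      have h2 : S m ≤ S' m := ih.1
      have := mul_le_mul_of_nonneg_left h1 hp0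
      have := mul_le_mul_of_nonneg_left h2 hq0
      have := key m
      nlinarith
  exact fun m => (main m).1

/-- Removing the self-loop at the center of a star never decreases the capture
probability between leaves: `P` is a star strategy with center `1` (index `⟨0,_⟩`),
self-loop probability `P(1,1) = p ∈ (0,1)`, and `P₁` rescales row `1` by `1/(1-p)`
after removing the self-loop. Then `ℙ¹(T_ij ≤ τ) ≥ ℙ(T_ij ≤ τ)` for all leaves `i, j`. -/
theorem stmt_13 (n : ℕ) (hn : 3 ≤ n) (P P₁ : Matrix (Fin n) (Fin n) ℝ)
    (hP0 : ∀ a b, 0 ≤ P a b) (hP1 : ∀ a, ∑ b, P a b = 1)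
    (hleafrows : ∀ j : Fin n, j ≠ ⟨0, by omega⟩ →
      P j ⟨0, by omega⟩ = 1 ∧ ∀ k : Fin n, k ≠ ⟨0, by omega⟩ → P j k = 0)
    (p : ℝ) (hp : P ⟨0, by omega⟩ ⟨0, by omega⟩ = p) (hp0 : 0 < p) (hp1 : p < 1)
    (hP₁row : P₁ ⟨0, by omega⟩ ⟨0, by omega⟩ = 0 ∧
      ∀ j : Fin n, j ≠ ⟨0, by omega⟩ → P₁ ⟨0, by omega⟩ j = P ⟨0, by omega⟩ j / (1 - p))
    (hP₁rest : ∀ a : Fin n, a ≠ ⟨0, by omega⟩ → ∀ b : Fin n, P₁ a b = P a b)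
    (τ : ℕ) (hτ : 1 ≤ τ) (i j : Fin n) (hi : i ≠ ⟨0, by omega⟩) (hj : j ≠ ⟨0, by omega⟩) :
    ∑ t ∈ Finset.range τ, hitF P t i j ≤ ∑ t ∈ Finset.range τ, hitF P₁ t i j := by
  have h1p : (0:ℝ) < 1 - p := by linarith
  set c : Fin n := ⟨0, by omega⟩ with hcdef
  have hjc : j ≠ c := hj
  have hic : i ≠ c := hi
  obtain ⟨hP₁cc, hP₁cj⟩ := hP₁row
  have hP₁0 : ∀ a b, 0 ≤ P₁ a b := by
    intro a b
    by_cases ha : a = c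
    · subst ha
      by_cases hb : b = c
      · rw [hb, hP₁cc]
      · rw [hP₁cj b hb]; exact div_nonneg (hP0 c b) (le_of_lt h1p)
    · rw [hP₁rest a ha]; exact hP0 a b
  have hleaf₁ : ∀ b : Fin n, b ≠ c → P₁ b c = 1 ∧ ∀ k, k ≠ c → P₁ b k = 0 := by
    intro b hb
    refine ⟨?_, fun k hk => ?_⟩
    · rw [hP₁rest b hb]; exact (hleafrows b hb).1
    · rw [hP₁rest b hb]; exact (hleafrows b hb).2 k hk
  obtain ⟨leafP, baseP, recP⟩ := star_aux P c j hjc (fun b hb => hleafrows b hb)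
  obtain ⟨leafP₁, baseP₁, recP₁⟩ := star_aux P₁ c j hjc hleaf₁
  set r := P c j with hr
  set q := ∑ b ∈ Finset.univ \ {c, j}, P c b with hq
  have hr0 : 0 ≤ r := hP0 c j
  have hq0 : 0 ≤ q := Finset.sum_nonneg fun b _ => hP0 c b
  have hq' : ∑ b ∈ Finset.univ \ {c, j}, P₁ c b = q / (1-p) := by
    rw [hq, Finset.sum_div]
    refine Finset.sum_congr rfl fun b hb => ?_
    have hb' : b ≠ c := by
      simp only [Finset.mem_sdiff, Finset.mem_insert, Finset.mem_singleton] at hb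
      exact fun h => hb.2 (Or.inl h)
    exact hP₁cj b hb'
  set S : ℕ → ℝ := fun m => ∑ k ∈ Finset.range m, hitF P k c j with hS
  set S' : ℕ → ℝ := fun m => ∑ k ∈ Finset.range m, hitF P₁ k c j with hS'
  have ha0 : hitF P 0 c j = r := rfl
  have ha0' : hitF P₁ 0 c j = r / (1-p) := hP₁cj j hjc
  have hSrec : ∀ m, S (m+2) = r + p * S (m+1) + q * S m := by
    intro m
    have h1 : hitF P 1 c j = p * hitF P 0 c j := by rw [baseP, hp]; rfl
    have h2 : ∀ k, hitF P (k+2) c j = p * hitF P (k+1) c j + q * hitF P k c j := by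
      intro k; rw [recP k, hp]
    have := sumrec (fun k => hitF P k c j) p q h1 h2 m
    simpa [hS, ha0] using this
  have hS'rec : ∀ m, S' (m+2) = r/(1-p) + (q/(1-p)) * S' m := by
    intro m
    have h1 : hitF P₁ 1 c j = 0 * hitF P₁ 0 c j := by rw [baseP₁, hP₁cc]; simp
    have h2 : ∀ k, hitF P₁ (k+2) c j
        = 0 * hitF P₁ (k+1) c j + (q/(1-p)) * hitF P₁ k c j := by
      intro k; rw [recP₁ k, hP₁cc, hq']
    have := sumrec (fun k => hitF P₁ k c j) 0 (q/(1-p)) h1 h2 m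
    simp only [zero_mul, add_zero, zero_add] at this ⊢
    simpa [hS', ha0'] using this
  have hS0 : S 0 = 0 := by simp [hS]
  have hS'0 : S' 0 = 0 := by simp [hS']
  have hS1 : S 1 = r := by simp [hS, ha0]
  have hS'1 : S' 1 = r/(1-p) := by simp [hS', ha0']
  have hmono : ∀ m, S' m ≤ S' (m+1) := by
    intro m
    have : S' (m+1) = S' m + hitF P₁ m c j := Finset.sum_range_succ _ m
    rw [this]
    have := hitF_nonneg_s13 P₁ hP₁0 m c j
    linarith
  have hcomp := compare S S' p q r (le_of_lt hp0) hq0 hr0 hp1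
    hS0 hS1 hSrec hS'0 hS'1 hS'rec hmono
  obtain ⟨m, rfl⟩ : ∃ m, τ = m + 1 := ⟨τ - 1, by omega⟩
  rw [Finset.sum_range_succ', Finset.sum_range_succ']
  have e0 : hitF P 0 i j = 0 := (hleafrows i hic).2 j hjc
  have e0' : hitF P₁ 0 i j = 0 := (hleaf₁ i hic).2 j hjc
  rw [e0, e0', add_zero, add_zero]
  calc ∑ t ∈ Finset.range m, hitF P (t+1) i j
      = S m := Finset.sum_congr rfl fun t _ => leafP t i hic
    _ ≤ S' m := hcomp m
    _ = ∑ t ∈ Finset.range m, hitF P₁ (t+1) i j :=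
        (Finset.sum_congr rfl fun t _ => leafP₁ t i hic).symm
end
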